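/- For every x=(x₂,x₃)∈ℝ² one has −(1/(4√2·π))·(∫₁^∞ e^{−2π r x₃²}·r^{−3/2} dr)·e^{−π(x₂²−x₃²)} = −(1/(2√2·π))·e^{−π(x₂²+x₃²)} + (1/(2√π))·|x₃|·Γ(1/2, 2πx₃²)·e^{−π(x₂²−x₃²)}. Equivalently, the e₃-component B(x) of the singular Schwartz function ψ̃₀,₁, defined by B(x) = −(∫₁^∞ (1/(4√2·π))·e^{−2π r x₃²}·r^{−3/2} dr)·e^{−π(x₂²−x₃²)}, equals the stated closed form. (Paper Lemma 5.4, formula for B.) -/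

import Mathlib

open MeasureTheory

/-- The upper incomplete gamma function `Γ(1/2, a) = ∫_a^∞ e^{-u} u^{-1/2} du`. -/
noncomputable def Ginc (a : ℝ) : ℝ := ∫ u in Set.Ioi a, Real.exp (-u) * u ^ (-(1:ℝ)/2)

open Set Filter in
private lemma int32' {c : ℝ} (hc : 0 ≤ c) :
    IntegrableOn (fun r : ℝ => Real.exp (-(c*r)) * r ^ (-(3:ℝ)/2)) (Ioi 1) := by
  apply (integrableOn_Ioi_rpow_of_lt (show (-(3:ℝ)/2) < -1 by norm_num) one_pos).mono'
    (show Measurable fun r : ℝ => Real.exp (-(c*r)) * r ^ (-(3:ℝ)/2) by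
      fun_prop).aestronglyMeasurable
  filter_upwards [ae_restrict_mem measurableSet_Ioi] with r hr
  have hr1 : (1:ℝ) < r := hr
  have h0 : (0:ℝ) < r := lt_trans one_pos hr1
  rw [Real.norm_eq_abs, abs_mul, abs_of_pos (Real.rpow_pos_of_pos h0 _),
    abs_of_pos (Real.exp_pos _)]
  nlinarith [Real.exp_le_one_iff.2 (by nlinarith : -(c*r) ≤ 0),
    Real.rpow_pos_of_pos h0 (-(3:ℝ)/2)]

open Set Filter in
private lemma int12' {c : ℝ} (hc : 0 < c) :
    IntegrableOn (fun r : ℝ => Real.exp (-(c*r)) * r ^ (-(1:ℝ)/2)) (Ioi 1) := by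
  apply (exp_neg_integrableOn_Ioi 1 hc).mono'
    (show Measurable fun r : ℝ => Real.exp (-(c*r)) * r ^ (-(1:ℝ)/2) by
      fun_prop).aestronglyMeasurable
  filter_upwards [ae_restrict_mem measurableSet_Ioi] with r hr
  have hr1 : (1:ℝ) < r := hr
  have h0 : (0:ℝ) < r := lt_trans one_pos hr1
  rw [Real.norm_eq_abs, abs_mul, abs_of_pos (Real.rpow_pos_of_pos h0 _),
    abs_of_pos (Real.exp_pos _)]
  have h1 : r ^ (-(1:ℝ)/2) ≤ 1 := by
    rw [show (1:ℝ) = r ^ (0:ℝ) by simp]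
    exact Real.rpow_le_rpow_of_exponent_le hr1.le (by norm_num)
  have h2 : Real.exp (-(c*r)) = Real.exp (-c*r) := by ring_nf
  nlinarith [Real.exp_pos (-(c*r))]

open Set Filter in
private lemma subst' {c : ℝ} (hc : 0 < c) :
    c * ∫ r in Ioi (1:ℝ), Real.exp (-(c*r)) * r ^ (-(1:ℝ)/2)
      = c ^ ((1:ℝ)/2) * Ginc c := by
  have h := integral_comp_mul_left_Ioi (fun u => Real.exp (-u) * u ^ (-(1:ℝ)/2)) 1 hc
  rw [mul_one] at h
  have h2 : ∫ x in Ioi (1:ℝ), Real.exp (-(c*x)) * (c*x) ^ (-(1:ℝ)/2)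
      = c⁻¹ * Ginc c := by
    simpa [Ginc, smul_eq_mul] using h
  have h3 : ∫ x in Ioi (1:ℝ), Real.exp (-(c*x)) * (c*x) ^ (-(1:ℝ)/2)
      = c ^ (-(1:ℝ)/2) * ∫ x in Ioi (1:ℝ), Real.exp (-(c*x)) * x ^ (-(1:ℝ)/2) := by
    rw [← integral_const_mul]
    apply setIntegral_congr_fun measurableSet_Ioi
    intro x hx
    have h0 : (0:ℝ) < x := lt_trans one_pos hx
    simp only []
    rw [Real.mul_rpow hc.le h0.le]; ring
  have key : c ^ ((1:ℝ)/2) * c ^ (-(1:ℝ)/2) = 1 := by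
    rw [← Real.rpow_add hc]; norm_num
  have h4 := h3.symm.trans h2
  set K := ∫ x in Ioi (1:ℝ), Real.exp (-(c*x)) * x ^ (-(1:ℝ)/2) with hK
  have h5 : K = c ^ ((1:ℝ)/2) * (c⁻¹ * Ginc c) := by
    rw [← h4, ← mul_assoc, key, one_mul]
  rw [h5]
  field_simp

open Set Filter in
private lemma key' {c : ℝ} (hc : 0 < c) :
    ∫ r in Ioi (1:ℝ), Real.exp (-(c*r)) * r ^ (-(3:ℝ)/2)
      = 2 * Real.exp (-c) - 2 * (c ^ ((1:ℝ)/2) * Ginc c) := by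
  set f : ℝ → ℝ := fun r => -2 * (Real.exp (-(c*r)) * r ^ (-(1:ℝ)/2)) with hf
  set f' : ℝ → ℝ := fun r =>
    2*c * (Real.exp (-(c*r)) * r ^ (-(1:ℝ)/2)) + Real.exp (-(c*r)) * r ^ (-(3:ℝ)/2) with hf'
  have hderiv : ∀ r ∈ Ioi (1:ℝ), HasDerivAt f (f' r) r := by
    intro r hr
    have h0 : (0:ℝ) < r := lt_trans one_pos hr
    have he : HasDerivAt (fun r : ℝ => Real.exp (-(c*r))) (-c * Real.exp (-(c*r))) r := by
      have h1 : HasDerivAt (fun r : ℝ => -(c*r)) (-c) r := by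
        simpa using ((hasDerivAt_id r).const_mul c).fun_neg
      simpa [mul_comm] using h1.exp
    have hp : HasDerivAt (fun r : ℝ => r ^ (-(1:ℝ)/2)) ((-(1:ℝ)/2) * r ^ (-(1:ℝ)/2 - 1)) r :=
      Real.hasDerivAt_rpow_const (Or.inl h0.ne')
    have := (he.fun_mul hp).const_mul (-2)
    convert this using 1
    · rfl
    · rfl
    have hrr : r ^ (-(1:ℝ)/2 - 1) = r ^ (-(3:ℝ)/2) := by norm_num
    simp only [hf']
    rw [hrr]
    ring
  have hcont : ContinuousWithinAt f (Ici 1) 1 := by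
    apply ContinuousAt.continuousWithinAt
    have h1 : ContinuousAt (fun r : ℝ => r ^ (-(1:ℝ)/2)) 1 :=
      Real.continuousAt_rpow_const 1 _ (Or.inl one_ne_zero)
    exact (continuousAt_const.mul ((Real.continuous_exp.continuousAt.comp
      ((continuous_const.mul continuous_id).neg.continuousAt)).mul h1))
  have htend : Tendsto f atTop (nhds 0) := by
    have T1 : Tendsto (fun r : ℝ => Real.exp (-(c*r))) atTop (nhds 0) := by
      have h : Tendsto (fun r : ℝ => c * r) atTop atTop :=
        tendsto_id.const_mul_atTop hc
      have h2 := Real.tendsto_exp_neg_atTop_nhds_zero.comp h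
      simpa [Function.comp_def] using h2
    have T2 : Tendsto (fun r : ℝ => r ^ (-(1:ℝ)/2)) atTop (nhds 0) := by
      have := tendsto_rpow_neg_atTop (show (0:ℝ) < 1/2 by norm_num)
      simpa [neg_div] using this
    have := (T1.mul T2).const_mul (-2)
    simpa [hf] using this
  have hint1 : IntegrableOn (fun r : ℝ =>
      2*c * (Real.exp (-(c*r)) * r ^ (-(1:ℝ)/2))) (Ioi 1) := (int12' hc).const_mul _
  have hint : IntegrableOn f' (Ioi 1) := hint1.add (int32' hc.le)
  have hI := integral_Ioi_of_hasDerivAt_of_tendsto hcont hderiv hint htend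
  have hf1 : f 1 = -2 * Real.exp (-c) := by
    simp [hf]
  rw [hf1] at hI
  have hsplit : ∫ r in Ioi (1:ℝ), f' r
      = 2*c * (∫ r in Ioi (1:ℝ), Real.exp (-(c*r)) * r ^ (-(1:ℝ)/2))
        + ∫ r in Ioi (1:ℝ), Real.exp (-(c*r)) * r ^ (-(3:ℝ)/2) := by
    rw [show (∫ r in Ioi (1:ℝ), f' r) = ∫ r in Ioi (1:ℝ),
        (2*c * (Real.exp (-(c*r)) * r ^ (-(1:ℝ)/2)) + Real.exp (-(c*r)) * r ^ (-(3:ℝ)/2))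
        from rfl,
      integral_add hint1 (int32' hc.le), integral_const_mul]
  rw [hsplit] at hI
  have hcK := subst' hc
  set K := ∫ x in Ioi (1:ℝ), Real.exp (-(c*x)) * x ^ (-(1:ℝ)/2)
  have : 2*c*K = 2 * (c ^ ((1:ℝ)/2) * Ginc c) := by rw [mul_assoc, hcK]
  linarith [hI, this]

open Set Filter in
theorem stmt1 (x₂ x₃ : ℝ) :
    -(1 / (4 * Real.sqrt 2 * Real.pi)) *
      (∫ r in Set.Ioi (1:ℝ), Real.exp (-(2 * Real.pi * r * x₃ ^ 2)) * r ^ (-(3:ℝ)/2)) *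
      Real.exp (-(Real.pi * (x₂ ^ 2 - x₃ ^ 2)))
    = -(1 / (2 * Real.sqrt 2 * Real.pi)) * Real.exp (-(Real.pi * (x₂ ^ 2 + x₃ ^ 2)))
      + (1 / (2 * Real.sqrt Real.pi)) * |x₃| * Ginc (2 * Real.pi * x₃ ^ 2) *
        Real.exp (-(Real.pi * (x₂ ^ 2 - x₃ ^ 2))) := by
  have s2 : Real.sqrt 2 * Real.sqrt 2 = 2 := Real.mul_self_sqrt (by norm_num)
  have sp : Real.sqrt Real.pi * Real.sqrt Real.pi = Real.pi :=
    Real.mul_self_sqrt Real.pi_pos.le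
  have hs2 : Real.sqrt 2 ≠ 0 := by positivity
  have hsp : Real.sqrt Real.pi ≠ 0 := by
    have := Real.sqrt_pos.2 Real.pi_pos; positivity
  rcases eq_or_ne x₃ 0 with h3 | h3
  · subst h3
    have h : ∫ r in Ioi (1:ℝ), Real.exp (-(2 * Real.pi * r * (0:ℝ) ^ 2)) * r ^ (-(3:ℝ)/2)
        = ∫ r in Ioi (1:ℝ), r ^ (-(3:ℝ)/2) := by
      apply setIntegral_congr_fun measurableSet_Ioi
      intro r _
      simp
    rw [h, integral_Ioi_rpow_of_lt (by norm_num) one_pos]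
    norm_num
    rw [← sp]
    field_simp
    ring
  · set c : ℝ := 2 * Real.pi * x₃ ^ 2 with hc
    have hcpos : 0 < c := by positivity
    have h : ∫ r in Ioi (1:ℝ), Real.exp (-(2 * Real.pi * r * x₃ ^ 2)) * r ^ (-(3:ℝ)/2)
        = ∫ r in Ioi (1:ℝ), Real.exp (-(c*r)) * r ^ (-(3:ℝ)/2) := by
      apply setIntegral_congr_fun measurableSet_Ioi
      intro r _
      simp only [hc]
      ring_nf
    rw [h, key' hcpos]
    have hch : c ^ ((1:ℝ)/2) = Real.sqrt 2 * Real.sqrt Real.pi * |x₃| := by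
      rw [← Real.sqrt_eq_rpow, hc, show 2 * Real.pi * x₃ ^ 2 = (2 * Real.pi) * x₃ ^ 2 by ring,
        Real.sqrt_mul (by positivity), Real.sqrt_sq_eq_abs,
        Real.sqrt_mul (by norm_num : (0:ℝ) ≤ 2)]
    have hE : Real.exp (-(Real.pi * (x₂ ^ 2 + x₃ ^ 2)))
        = Real.exp (-c) * Real.exp (-(Real.pi * (x₂ ^ 2 - x₃ ^ 2))) := by
      rw [← Real.exp_add]
      congr 1
      rw [hc]; ring
    rw [hch, hE]
    set E := Real.exp (-(Real.pi * (x₂ ^ 2 - x₃ ^ 2)))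
    set F := Real.exp (-c)
    set G := Ginc c
    field_simp
    linear_combination (4 * Real.sqrt 2 * |x₃| * G * E) * sp
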